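/- Let Σ be a p×p real symmetric positive definite matrix and Γ a p×p real orthogonal matrix with columns γ_1,…,γ_p. Define f on the positive orthant {d ∈ ℝ^p : d_i > 0 for all i} by f(d) = tr(Σ · (Γ diag(d) Γᵗ)⁻¹) − log det(Σ · (Γ diag(d) Γᵗ)⁻¹) − p, which is the Kullback–Leibler divergence KL(N(0,Σ), N(0, Γ diag(d) Γᵗ)) between the corresponding zero-mean normal distributions. Then f attains a unique global minimum on the positive orthant, attained exactly at the point d* with d*_i = (Γᵗ Σ Γ)_{ii} = γ_iᵗ Σ γ_i for i = 1,…,p. (Hence the set Ã(λ,Γ) = {Σ : (ΓᵗΣΓ)_{ii} = λ_i for all i} consists of the covariance matrices whose KL-closest point on the fixed-eigenvector family {Γ diag(d) Γᵗ} is Γ diag(λ) Γᵗ.) -/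

import Mathlib

open Matrix

/-- The Kullback–Leibler divergence
`f(d) = tr(Σ (Γ diag(d) Γᵗ)⁻¹) − log det(Σ (Γ diag(d) Γᵗ)⁻¹) − p` from `N(0,Σ)` to the
fixed-eigenvector family attains a unique global minimum on the positive orthant,
exactly at `d*` with `d*_i = (Γᵗ Σ Γ)_{ii}`. -/
theorem kl_projection_onto_fixed_eigenvector_family
    (p : ℕ) (hp : 1 ≤ p)
    (S : Matrix (Fin p) (Fin p) ℝ) (hS : S.PosDef)
    (Γ : Matrix (Fin p) (Fin p) ℝ) (hΓ : Γ ∈ Matrix.orthogonalGroup (Fin p) ℝ)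
    (f : (Fin p → ℝ) → ℝ)
    (hf : ∀ d : Fin p → ℝ, f d =
      Matrix.trace (S * (Γ * Matrix.diagonal d * Γᵀ)⁻¹)
        - Real.log (Matrix.det (S * (Γ * Matrix.diagonal d * Γᵀ)⁻¹)) - p)
    (dstar : Fin p → ℝ) (hdstar : ∀ i, dstar i = (Γᵀ * S * Γ) i i) :
    (∀ i, 0 < dstar i)
    ∧ (∀ d : Fin p → ℝ, (∀ i, 0 < d i) → f dstar ≤ f d)
    ∧ (∀ d : Fin p → ℝ, (∀ i, 0 < d i) → d ≠ dstar → f dstar < f d) := by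
  classical
  have hΓ1 : Γ * Γᵀ = 1 := by
    have := (Matrix.mem_unitaryGroup_iff).mp hΓ
    simpa [Matrix.star_eq_conjTranspose, Matrix.conjTranspose_eq_transpose_of_trivial] using this
  have hΓ2 : Γᵀ * Γ = 1 := by
    have := (Matrix.mem_unitaryGroup_iff').mp hΓ
    simpa [Matrix.star_eq_conjTranspose, Matrix.conjTranspose_eq_transpose_of_trivial] using this
  set A : Matrix (Fin p) (Fin p) ℝ := Γᵀ * S * Γ with hA
  -- diagonal entries of A are positive
  have hApos : ∀ i, 0 < A i i := by
    intro i
    have hv : (fun j => Γ j i) ≠ 0 := by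
      intro h
      have h1 : (Γᵀ * Γ) i i = (1 : Matrix (Fin p) (Fin p) ℝ) i i := by rw [hΓ2]
      rw [Matrix.mul_apply] at h1
      simp only [Matrix.transpose_apply, Matrix.one_apply_eq] at h1
      have : ∀ j, Γ j i = 0 := fun j => congrFun h j
      simp [this] at h1
    have hpos := (Matrix.posDef_iff_dotProduct_mulVec.mp hS).2 (x := fun j => Γ j i) hv
    have hpos' : 0 < dotProduct (fun j => Γ j i) (S.mulVec (fun j => Γ j i)) := by
      simpa using hpos
    have heq : A i i = dotProduct (fun j => Γ j i) (S.mulVec (fun j => Γ j i)) := by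
      rw [hA]
      simp only [Matrix.mul_apply, Matrix.transpose_apply, dotProduct, Matrix.mulVec,
        dotProduct, Finset.sum_mul, Finset.mul_sum]
      rw [Finset.sum_comm]
      apply Finset.sum_congr rfl
      intro j _
      apply Finset.sum_congr rfl
      intro k _
      ring
    rw [heq]; exact hpos'
  have hdpos : ∀ i, 0 < dstar i := fun i => (hdstar i) ▸ hApos i
  have hdetS : 0 < S.det := hS.det_pos
  -- key formula for f on the positive orthant
  have key : ∀ d : Fin p → ℝ, (∀ i, 0 < d i) →
      f d = (∑ i, A i i / d i) + (∑ i, Real.log (d i)) - Real.log S.det - p := by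
    intro d hd
    have hd0 : ∀ i, d i ≠ 0 := fun i => (hd i).ne'
    have hinv : (Γ * Matrix.diagonal d * Γᵀ)⁻¹ = Γ * Matrix.diagonal (fun i => (d i)⁻¹) * Γᵀ := by
      apply Matrix.inv_eq_right_inv
      have : Γ * Matrix.diagonal d * Γᵀ * (Γ * Matrix.diagonal (fun i => (d i)⁻¹) * Γᵀ)
          = Γ * (Matrix.diagonal d * (Γᵀ * Γ) * Matrix.diagonal (fun i => (d i)⁻¹)) * Γᵀ := by
        noncomm_ring
      rw [this, hΓ2, Matrix.mul_one, Matrix.diagonal_mul_diagonal]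
      have hdd : (fun i => d i * (d i)⁻¹) = fun _ => (1 : ℝ) := by
        funext i; exact mul_inv_cancel₀ (hd0 i)
      rw [hdd, Matrix.diagonal_one, Matrix.mul_one, hΓ1]
    rw [hf d, hinv]
    have htr : Matrix.trace (S * (Γ * Matrix.diagonal (fun i => (d i)⁻¹) * Γᵀ)) =
        ∑ i, A i i / d i := by
      have h1 : S * (Γ * Matrix.diagonal (fun i => (d i)⁻¹) * Γᵀ) =
          S * Γ * Matrix.diagonal (fun i => (d i)⁻¹) * Γᵀ := by noncomm_ring
      rw [h1, Matrix.trace_mul_comm (S * Γ * Matrix.diagonal (fun i => (d i)⁻¹)) Γᵀ]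
      have h2 : Γᵀ * (S * Γ * Matrix.diagonal (fun i => (d i)⁻¹)) =
          A * Matrix.diagonal (fun i => (d i)⁻¹) := by rw [hA]; noncomm_ring
      rw [h2]
      rw [Matrix.trace]
      simp only [Matrix.diag, Matrix.mul_diagonal]
      apply Finset.sum_congr rfl
      intro i _
      rw [div_eq_mul_inv]
    have hdet : (S * (Γ * Matrix.diagonal (fun i => (d i)⁻¹) * Γᵀ)).det
        = S.det * ∏ i, (d i)⁻¹ := by
      have hγ : Γ.det * Γ.det = 1 := by
        have := congrArg Matrix.det hΓ1
        simpa [Matrix.det_mul, Matrix.det_transpose] using this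
      rw [Matrix.det_mul, Matrix.det_mul, Matrix.det_mul, Matrix.det_diagonal,
        Matrix.det_transpose]
      linear_combination S.det * (∏ i, (d i)⁻¹) * hγ
    rw [htr, hdet]
    have hlog : Real.log (S.det * ∏ i, (d i)⁻¹) =
        Real.log S.det - ∑ i, Real.log (d i) := by
      rw [Real.log_mul hdetS.ne' (Finset.prod_ne_zero_iff.mpr fun i _ => inv_ne_zero (hd0 i)),
        Real.log_prod (fun i _ => inv_ne_zero (hd0 i))]
      simp [Real.log_inv, sub_eq_add_neg]
    rw [hlog]
    ring
  -- value at dstar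
  have hfdstar : f dstar = (∑ i, Real.log (A i i)) - Real.log S.det := by
    rw [key dstar hdpos]
    have h1 : ∀ i, A i i / dstar i = 1 := by
      intro i; rw [hdstar i]; exact div_self (hApos i).ne'
    have h2 : ∀ i, Real.log (dstar i) = Real.log (A i i) := by
      intro i; rw [hdstar i]
    simp only [h1, h2, Finset.sum_const, Finset.card_univ, Fintype.card_fin, smul_eq_mul,
      mul_one]
    ring
  -- difference formula
  have hdiff : ∀ d : Fin p → ℝ, (∀ i, 0 < d i) →
      f d - f dstar = ∑ i, (A i i / d i - 1 - Real.log (A i i / d i)) := by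
    intro d hd
    rw [key d hd, hfdstar]
    have : ∀ i, Real.log (A i i / d i) = Real.log (A i i) - Real.log (d i) := by
      intro i; exact Real.log_div (hApos i).ne' (hd i).ne'
    have h1 : ∑ i, (A i i / d i - 1 - Real.log (A i i / d i))
        = (∑ i, A i i / d i) - (∑ _i : Fin p, (1 : ℝ))
          - ((∑ i, Real.log (A i i)) - (∑ i, Real.log (d i))) := by
      rw [← Finset.sum_sub_distrib, ← Finset.sum_sub_distrib, ← Finset.sum_sub_distrib]
      exact Finset.sum_congr rfl fun i _ => by rw [this i]
    rw [h1]
    simp only [Finset.sum_const, Finset.card_univ, Fintype.card_fin, nsmul_eq_mul, mul_one]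
    ring
  -- each term is nonneg, strictly positive when d i ≠ dstar i
  have hterm_nonneg : ∀ d : Fin p → ℝ, (∀ i, 0 < d i) → ∀ i,
      0 ≤ A i i / d i - 1 - Real.log (A i i / d i) := by
    intro d hd i
    have ht : 0 < A i i / d i := div_pos (hApos i) (hd i)
    have := Real.log_le_sub_one_of_pos ht
    linarith
  have hterm_pos : ∀ d : Fin p → ℝ, (∀ i, 0 < d i) → ∀ i, d i ≠ dstar i →
      0 < A i i / d i - 1 - Real.log (A i i / d i) := by
    intro d hd i hi
    have ht : 0 < A i i / d i := div_pos (hApos i) (hd i)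
    have hne : A i i / d i ≠ 1 := by
      intro h
      apply hi
      have := (div_eq_one_iff_eq (hd i).ne').mp h
      rw [hdstar i, ← this]
    have := Real.log_lt_sub_one_of_pos ht hne
    linarith
  refine ⟨hdpos, ?_, ?_⟩
  · intro d hd
    have h := hdiff d hd
    have h2 : 0 ≤ ∑ i, (A i i / d i - 1 - Real.log (A i i / d i)) :=
      Finset.sum_nonneg fun i _ => hterm_nonneg d hd i
    linarith
  · intro d hd hne
    have h := hdiff d hd
    obtain ⟨i, hi⟩ : ∃ i, d i ≠ dstar i := by
      by_contra hc
      push_neg at hc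
      exact hne (funext hc)
    have h2 : 0 < ∑ i, (A i i / d i - 1 - Real.log (A i i / d i)) := by
      apply Finset.sum_pos' (fun j _ => hterm_nonneg d hd j)
      exact ⟨i, Finset.mem_univ i, hterm_pos d hd i hi⟩
    linarith
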